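/- Let z > 0 satisfy (z − 1)e^z = −e^{−λC}. Then, as λC → 0⁺, z = √(2λC) + O(λC); consequently the optimal period T = z/λ + C satisfies T = √(2C/λ) + C + o(√(C/λ)). -/

import Mathlib

open Filter Asymptotics

set_option maxHeartbeats 1000000 in
lemma young_key (l : ℝ) (hl : 0 < l) (C : ℝ) (hC : 0 < C) (hu : l * C ≤ 1/200)
    (z : ℝ) (hz0 : 0 < z) (heq : (z - 1) * Real.exp z = -Real.exp (-(l*C))) :
    |z - Real.sqrt (2 * l * C)| ≤ 3 * (l * C) := by
  set u : ℝ := l * C with hudef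
  have hu0 : 0 < u := mul_pos hl hC
  set s : ℝ := Real.sqrt u with hsdef
  have hs0 : 0 < s := Real.sqrt_pos.mpr hu0
  have hs2 : s ^ 2 = u := Real.sq_sqrt hu0.le
  have hs14 : s ≤ 1/14 := by
    rw [hsdef, show (1:ℝ)/14 = Real.sqrt ((1/14)^2) from (Real.sqrt_sq (by norm_num)).symm]
    exact Real.sqrt_le_sqrt (by nlinarith)
  have hE : (1 - z) * Real.exp z = Real.exp (-u) := by linear_combination -heq
  have hz1 : z < 1 := by
    by_contra h
    push_neg at h
    nlinarith [mul_nonneg (by linarith : (0:ℝ) ≤ z - 1) (Real.exp_pos z).le,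
      Real.exp_pos (-u)]
  have hlb : 1 + z + z^2/2 + z^3/6 ≤ Real.exp z := by
    have h := Real.sum_le_exp_of_nonneg hz0.le 4
    norm_num [Finset.sum_range_succ, Nat.factorial] at h
    linarith
  have hub : Real.exp z ≤ 1 + z + z^2/2 + z^3/6 + z^4 * (5/96) := by
    have h2 := Real.exp_bound' hz0.le hz1.le (n := 4) (by norm_num)
    norm_num [Finset.sum_range_succ, Nat.factorial] at h2
    linarith
  have hene_lb : 1 - u ≤ Real.exp (-u) := by
    have := Real.add_one_le_exp (-u); linarith
  have hene_ub : Real.exp (-u) ≤ 1 - u + u^2 := by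
    have h1 : 1 + u ≤ Real.exp u := by have := Real.add_one_le_exp u; linarith
    have h2 : Real.exp (-u) * Real.exp u = 1 := by rw [← Real.exp_add]; simp
    nlinarith [Real.exp_pos (-u)]
  have hB : z^2 ≤ 2*u := by nlinarith [hE, hub, hene_lb]
  have hA : u ≤ z^2/2 + z^3/3 + z^4/6 + u^2 := by nlinarith [hE, hlb, hene_ub]
  set t : ℝ := Real.sqrt (2*l*C) with htdef
  have ht2 : t ^ 2 = 2*u := by
    rw [htdef, hudef, mul_assoc]; exact Real.sq_sqrt (by positivity)
  have ht0 : 0 ≤ t := Real.sqrt_nonneg _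
  have hzt : z ≤ t := by nlinarith
  have hz2s : z ≤ 2*s := by nlinarith
  have hzlb2 : 2*s^2 - 3*s^3 ≤ z^2 := by
    nlinarith [mul_le_mul_of_nonneg_left hz2s (by positivity : (0:ℝ) ≤ z^2),
      mul_le_mul_of_nonneg_left hB (by positivity : (0:ℝ) ≤ z),
      sq_nonneg (z^2), hs14, hs0.le, hz0.le]
  have hzs : s ≤ z := by nlinarith
  have htz : t ≤ z + 3*u := by
    nlinarith [mul_le_mul_of_nonneg_left hzs (by positivity : (0:ℝ) ≤ 6*s^2),
      sq_nonneg s, mul_pos hz0 hs0]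
  rw [abs_le]
  constructor <;> nlinarith

/-- If z(C) > 0 satisfies (z − 1)e^z = −e^{−λC}, then as C → 0⁺,
z = √(2λC) + O(λC); consequently T = z/λ + C = √(2C/λ) + C + o(√(C/λ)). -/
theorem young_first_order (l : ℝ) (hl : 0 < l) (z : ℝ → ℝ)
    (hz : ∀ C : ℝ, 0 < C → 0 < z C ∧
      (z C - 1) * Real.exp (z C) = -Real.exp (-(l * C))) :
    (fun C => z C - Real.sqrt (2 * l * C)) =O[nhdsWithin 0 (Set.Ioi 0)]
      (fun C => l * C) ∧
    (fun C => (z C / l + C) - (Real.sqrt (2 * C / l) + C))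
      =o[nhdsWithin 0 (Set.Ioi 0)] (fun C => Real.sqrt (C / l)) := by
  have hδ : (0:ℝ) < 1/(200*l) := by positivity
  have hmem : Set.Ioo (0:ℝ) (1/(200*l)) ∈ nhdsWithin (0:ℝ) (Set.Ioi 0) :=
    Ioo_mem_nhdsGT_of_mem ⟨le_refl 0, hδ⟩
  have hO : (fun C => z C - Real.sqrt (2 * l * C)) =O[nhdsWithin 0 (Set.Ioi 0)]
      (fun C => l * C) := by
    rw [isBigO_iff]
    refine ⟨3, ?_⟩
    filter_upwards [hmem] with C hCm
    obtain ⟨hC0, hCδ⟩ := hCm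
    have hu : l * C ≤ 1/200 := by
      rw [lt_div_iff₀ (by positivity)] at hCδ
      nlinarith
    obtain ⟨hz0, heq⟩ := hz C hC0
    have := young_key l hl C hC0 hu (z C) hz0 heq
    rw [Real.norm_eq_abs, Real.norm_eq_abs]
    calc |z C - Real.sqrt (2*l*C)| ≤ 3 * (l*C) := this
      _ ≤ 3 * |l*C| := by gcongr; exact le_abs_self _
  refine ⟨hO, ?_⟩
  -- little-o of (l*C) vs sqrt(C/l)
  have hone : Tendsto (fun C : ℝ => l * Real.sqrt (l * C)) (nhdsWithin 0 (Set.Ioi 0)) (nhds 0) := by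
    have hc : Continuous (fun C : ℝ => l * Real.sqrt (l * C)) := by continuity
    have h := (hc.tendsto 0).mono_left (nhdsWithin_le_nhds (s := Set.Ioi 0))
    simpa using h
  have ho1 : (fun C : ℝ => l * Real.sqrt (l * C)) =o[nhdsWithin 0 (Set.Ioi 0)]
      (fun _ => (1:ℝ)) := (isLittleO_one_iff ℝ).mpr hone
  have hlo : (fun C : ℝ => l * C) =o[nhdsWithin 0 (Set.Ioi 0)]
      (fun C => Real.sqrt (C / l)) := by
    have h2 := ho1.mul_isBigO (isBigO_refl (fun C : ℝ => Real.sqrt (C / l)) _)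
    refine h2.congr' ?_ ?_
    · filter_upwards [self_mem_nhdsWithin] with C hC0
      have hC0 : 0 < C := hC0
      have h3 : Real.sqrt (l*C) * Real.sqrt (C/l) = C := by
        rw [← Real.sqrt_mul (by positivity)]
        rw [show l * C * (C / l) = C^2 by field_simp]
        exact Real.sqrt_sq hC0.le
      simp only [mul_assoc, h3]
    · filter_upwards with C; ring_nf
  have hfinal := (hO.const_mul_left (1/l)).trans_isLittleO hlo
  refine hfinal.congr' ?_ (by rfl)
  filter_upwards [self_mem_nhdsWithin] with C hC0
  have hC0 : (0:ℝ) < C := hC0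
  have hsq : Real.sqrt (2 * C / l) * l = Real.sqrt (2 * l * C) := by
    calc Real.sqrt (2*C/l) * l = Real.sqrt (2*C/l) * Real.sqrt (l^2) := by
          rw [Real.sqrt_sq hl.le]
      _ = Real.sqrt (2*C/l * l^2) := (Real.sqrt_mul (by positivity) _).symm
      _ = Real.sqrt (2*l*C) := by rw [show 2*C/l*l^2 = 2*l*C by field_simp]
  rw [show Real.sqrt (2*C/l) = Real.sqrt (2*l*C)/l by rw [eq_div_iff hl.ne']; exact hsq]
  field_simp
  ring
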